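/- arXiv:2209.03227 — 3 statements merged into one kernel-verified Lean document; each statement's English description precedes it below -/
import Mathlib

section
/- Let G be a finite graph with maximum degree d_max and let v be a vertex of G. Then for every r ≥ 1, the number A_r of connected induced subgraphs of G containing v and having exactly r vertices satisfies A_r ≤ 2^{(d_max - 1) r + 2}. -/
section Aux
variable {V : Type*} [Fintype V] [DecidableEq V] (G : SimpleGraph V) [DecidableRel G.Adj]

noncomputable def nbrsL (u : V) : List V := (G.neighborFinset u).toList

noncomputable def runF : List (V × List V) → Finset V → List Bool → Finset V
  | [], cur, _ => cur
  | (_, []) :: q, cur, bs => runF q cur bs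
  | (_, _ :: _) :: _, cur, [] => cur
  | (u, w :: ws) :: q, cur, b :: bs =>
      if b = true ∧ w ∉ cur then
        runF (((u, ws) :: q) ++ [(w, (nbrsL G w).erase u)]) (insert w cur) bs
      else runF ((u, ws) :: q) cur bs
termination_by q _ bs => (bs.length, (q.map fun p => p.2.length + 1).sum)
decreasing_by
  · apply Prod.Lex.right; simp; try omega
  · apply Prod.Lex.left; simp
  · apply Prod.Lex.left; simp

noncomputable def simF (S : Finset V) : List (V × List V) → Finset V → List Bool
  | [], _ => []
  | (_, []) :: q, cur => simF S q cur
  | (u, w :: ws) :: q, cur =>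
      if _h : w ∈ S ∧ w ∉ cur then
        decide (w ∈ S) :: simF S (((u, ws) :: q) ++ [(w, (nbrsL G w).erase u)]) (insert w cur)
      else
        decide (w ∈ S) :: simF S ((u, ws) :: q) cur
termination_by q cur => ((S \ cur).card, (q.map fun p => p.2.length + 1).sum)
decreasing_by
  · apply Prod.Lex.right; simp; try omega
  · apply Prod.Lex.left
    apply Finset.card_lt_card
    constructor
    · exact Finset.sdiff_subset_sdiff le_rfl (Finset.subset_insert _ _)
    · intro hsub
      have : w ∈ S \ cur := Finset.mem_sdiff.mpr ⟨_h.1, _h.2⟩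
      have := hsub this
      simp at this
  · apply Prod.Lex.right; simp

end Aux

section Aux2
variable {V : Type*} [Fintype V] [DecidableEq V] (G : SimpleGraph V) [DecidableRel G.Adj]

lemma mem_nbrsL {u w : V} : w ∈ nbrsL G u ↔ G.Adj u w := by
  simp [nbrsL]

lemma simF_length (dmax : ℕ) (hdeg : ∀ u : V, (G.neighborFinset u).card ≤ dmax)
    (S : Finset V) (q : List (V × List V)) (cur : Finset V)
    (hadj : ∀ p ∈ q, ∀ w ∈ p.2, G.Adj p.1 w) :
    (simF G S q cur).length ≤ (q.map fun p => p.2.length).sum + (S \ cur).card * (dmax - 1) := by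
  induction q, cur using simF.induct G S with
  | case1 cur => simp [simF]
  | case2 u q cur ih =>
      rw [simF]
      have := ih (fun p hp => hadj p (List.mem_cons_of_mem _ hp))
      simpa using this
  | case3 u w ws q cur h ih =>
      rw [simF, dif_pos h]
      have hwadj : G.Adj u w := hadj (u, w :: ws) (List.mem_cons_self) w (List.mem_cons_self)
      have hadj' : ∀ p ∈ ((u, ws) :: q) ++ [(w, (nbrsL G w).erase u)], ∀ x ∈ p.2, G.Adj p.1 x := by
        intro p hp x hx
        rcases List.mem_append.mp hp with hp | hp
        · rcases List.mem_cons.mp hp with rfl | hp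
          · exact hadj (u, w :: ws) (List.mem_cons_self) x (List.mem_cons_of_mem _ hx)
          · exact hadj p (List.mem_cons_of_mem _ hp) x hx
        · simp only [List.mem_singleton] at hp
          subst hp
          exact (mem_nbrsL G).mp (List.mem_of_mem_erase hx)
      have hlen : ((nbrsL G w).erase u).length ≤ dmax - 1 := by
        have hu : u ∈ nbrsL G w := (mem_nbrsL G).mpr hwadj.symm
        rw [List.length_erase_of_mem hu]
        have : (nbrsL G w).length ≤ dmax := by
          simpa [nbrsL] using hdeg w
        omega
      have hcard : (S \ insert w cur).card + 1 = (S \ cur).card := by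
        rw [Finset.sdiff_insert]
        rw [Finset.card_erase_of_mem (Finset.mem_sdiff.mpr ⟨h.1, h.2⟩)]
        have : 0 < (S \ cur).card := Finset.card_pos.mpr ⟨w, Finset.mem_sdiff.mpr ⟨h.1, h.2⟩⟩
        omega
      have := ih hadj'
      simp only [List.map_append, List.map_cons, List.sum_append, List.sum_cons,
        List.map_nil, List.sum_nil, List.length_cons] at this ⊢
      have hmul : ((S \ insert w cur).card + 1) * (dmax - 1) = (S \ cur).card * (dmax - 1) := by
        rw [hcard]
      rw [add_mul, one_mul] at hmul
      omega
  | case4 u w ws q cur h ih =>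
      rw [simF, dif_neg h]
      have hadj' : ∀ p ∈ (u, ws) :: q, ∀ x ∈ p.2, G.Adj p.1 x := by
        intro p hp x hx
        rcases List.mem_cons.mp hp with rfl | hp
        · exact hadj (u, w :: ws) (List.mem_cons_self) x (List.mem_cons_of_mem _ hx)
        · exact hadj p (List.mem_cons_of_mem _ hp) x hx
      have := ih hadj'
      simp only [List.map_cons, List.sum_cons, List.length_cons] at this ⊢
      omega

end Aux2

set_option linter.unusedSectionVars false

section Aux3
variable {V : Type*} [Fintype V] [DecidableEq V] (G : SimpleGraph V) [DecidableRel G.Adj]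

lemma closure_subset {S : Finset V} (hconn : (G.induce (S : Set V)).Connected)
    {v : V} (hv : v ∈ S) (c : Finset V) (hvc : v ∈ c)
    (hcl : ∀ u ∈ c, ∀ w, G.Adj u w → w ∈ S → w ∈ c) : S ⊆ c := by
  intro w hw
  obtain ⟨p⟩ := hconn.preconnected ⟨v, hv⟩ ⟨w, hw⟩
  have key : ∀ (x y : (S : Set V)) (_ : (G.induce (S : Set V)).Walk x y),
      (x : V) ∈ c → (y : V) ∈ c := by
    intro x y p
    induction p with
    | nil => exact fun h => h
    | cons h _ ih =>
        intro hx
        apply ih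
        exact hcl _ hx _ h (by exact Subtype.coe_prop _)
  exact key _ _ p hvc

lemma runF_simF (v : V) (S : Finset V) (hvS : v ∈ S)
    (hconn : (G.induce (S : Set V)).Connected)
    (q : List (V × List V)) (cur : Finset V)
    (hv : v ∈ cur) (hsub : cur ⊆ S)
    (hfst : ∀ p ∈ q, p.1 ∈ cur)
    (hadj : ∀ p ∈ q, ∀ w ∈ p.2, G.Adj p.1 w)
    (hcov : ∀ u ∈ cur, ∀ w, G.Adj u w → w ∈ S → w ∈ cur ∨ ∃ p ∈ q, w ∈ p.2)
    (extra : List Bool) :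
    runF G q cur (simF G S q cur ++ extra) = S := by
  induction q, cur using simF.induct G S with
  | case1 cur =>
      rw [simF, List.nil_append, runF]
      refine Finset.Subset.antisymm hsub ?_
      refine closure_subset G hconn hvS cur hv ?_
      intro u hu w haw hwS
      rcases hcov u hu w haw hwS with h | ⟨p, hp, _⟩
      · exact h
      · simp at hp
  | case2 u q cur ih =>
      rw [simF, runF]
      refine ih hv hsub (fun p hp => hfst p (List.mem_cons_of_mem _ hp))
        (fun p hp => hadj p (List.mem_cons_of_mem _ hp)) ?_
      intro u' hu' w haw hwS
      rcases hcov u' hu' w haw hwS with h | ⟨p, hp, hw2⟩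
      · exact Or.inl h
      · rcases List.mem_cons.mp hp with rfl | hp
        · simp at hw2
        · exact Or.inr ⟨p, hp, hw2⟩
  | case3 u w ws q cur h ih =>
      rw [simF, dif_pos h, List.cons_append, runF]
      rw [if_pos ⟨by simpa using h.1, h.2⟩]
      have hwadj : G.Adj u w := hadj (u, w :: ws) (List.mem_cons_self) w (List.mem_cons_self)
      refine ih (Finset.mem_insert_of_mem hv) ?_ ?_ ?_ ?_
      · exact Finset.insert_subset h.1 hsub
      · intro p hp
        rcases List.mem_append.mp hp with hp | hp
        · rcases List.mem_cons.mp hp with rfl | hp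
          · exact Finset.mem_insert_of_mem
              (hfst (u, w :: ws) (List.mem_cons_self))
          · exact Finset.mem_insert_of_mem (hfst p (List.mem_cons_of_mem _ hp))
        · simp only [List.mem_singleton] at hp
          subst hp
          exact Finset.mem_insert_self _ _
      · intro p hp x hx
        rcases List.mem_append.mp hp with hp | hp
        · rcases List.mem_cons.mp hp with rfl | hp
          · exact hadj (u, w :: ws) (List.mem_cons_self) x (List.mem_cons_of_mem _ hx)
          · exact hadj p (List.mem_cons_of_mem _ hp) x hx
        · simp only [List.mem_singleton] at hp
          subst hp
          exact (mem_nbrsL G).mp (List.mem_of_mem_erase hx)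
      · intro u' hu' x hax hxS
        rcases Finset.mem_insert.mp hu' with heq | hu'
        · subst heq
          by_cases hxu : x = u
          · refine Or.inl (by
              rw [hxu]
              exact Finset.mem_insert_of_mem (hfst (u, u' :: ws) (List.mem_cons_self)))
          · refine Or.inr ⟨(u', (nbrsL G u').erase u), ?_, ?_⟩
            · simp
            · exact (List.mem_erase_of_ne hxu).mpr ((mem_nbrsL G).mpr hax)
        · rcases hcov u' hu' x hax hxS with hx | ⟨p, hp, hx2⟩
          · exact Or.inl (Finset.mem_insert_of_mem hx)
          · rcases List.mem_cons.mp hp with rfl | hp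
            · rcases List.mem_cons.mp hx2 with rfl | hx2
              · exact Or.inl (Finset.mem_insert_self _ _)
              · exact Or.inr ⟨(u, ws), by simp, hx2⟩
            · exact Or.inr ⟨p, by simp [hp], hx2⟩
  | case4 u w ws q cur h ih =>
      rw [simF, dif_neg h, List.cons_append, runF]
      rw [if_neg (by
        intro hc
        exact h ⟨by simpa using hc.1, hc.2⟩)]
      refine ih hv hsub ?_ ?_ ?_
      · intro p hp
        rcases List.mem_cons.mp hp with rfl | hp
        · exact hfst (u, w :: ws) (List.mem_cons_self)
        · exact hfst p (List.mem_cons_of_mem _ hp)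
      · intro p hp x hx
        rcases List.mem_cons.mp hp with rfl | hp
        · exact hadj (u, w :: ws) (List.mem_cons_self) x (List.mem_cons_of_mem _ hx)
        · exact hadj p (List.mem_cons_of_mem _ hp) x hx
      · intro u' hu' x hax hxS
        rcases hcov u' hu' x hax hxS with hx | ⟨p, hp, hx2⟩
        · exact Or.inl hx
        · rcases List.mem_cons.mp hp with rfl | hp
          · rcases List.mem_cons.mp hx2 with rfl | hx2
            · -- x = w, w ∈ S: since ¬(w ∈ S ∧ w ∉ cur), w ∈ cur
              left
              by_contra hw
              exact h ⟨hxS, hw⟩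
            · exact Or.inr ⟨(u, ws), List.mem_cons_self, hx2⟩
          · exact Or.inr ⟨p, List.mem_cons_of_mem _ hp, hx2⟩

end Aux3

/-- The number of connected induced subgraphs with `r` vertices containing a fixed
vertex `v` of a finite graph with maximum degree `dmax` is at most
`2 ^ ((dmax - 1) * r + 2)`. -/
theorem stmt_0 {V : Type*} [Fintype V] (G : SimpleGraph V) [DecidableRel G.Adj]
    (dmax : ℕ) (hdeg : ∀ u : V, G.degree u ≤ dmax) (v : V) (r : ℕ) (hr : 1 ≤ r) :
    Nat.card {S : Finset V //
        v ∈ S ∧ S.card = r ∧ (G.induce (S : Set V)).Connected}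
      ≤ 2 ^ ((dmax - 1) * r + 2) := by
  classical
  set N := (dmax - 1) * r + 2 with hN
  set q0 : List (V × List V) := [(v, nbrsL G v)] with hq0
  set cur0 : Finset V := {v} with hcur0
  have hdeg' : ∀ u : V, (G.neighborFinset u).card ≤ dmax := fun u => hdeg u
  -- length bound for each good S
  have hlen : ∀ (S : Finset V), v ∈ S → S.card = r →
      (simF G S q0 cur0).length ≤ N := by
    intro S hvS hcard
    have h1 := simF_length G dmax hdeg' S q0 cur0 (by
      intro p hp w hw
      simp only [hq0, List.mem_singleton] at hp
      subst hp
      exact (mem_nbrsL G).mp hw)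
    have h2 : ((q0.map fun p => p.2.length).sum : ℕ) = (nbrsL G v).length := by
      simp [hq0]
    have h3 : (nbrsL G v).length ≤ dmax := by
      simpa [nbrsL] using hdeg' v
    have h4 : (S \ cur0).card = r - 1 := by
      rw [hcur0, Finset.sdiff_singleton_eq_erase, Finset.card_erase_of_mem hvS, hcard]
    rw [h2, h4] at h1
    have h5 : dmax + (r - 1) * (dmax - 1) ≤ N := by
      obtain ⟨r', rfl⟩ : ∃ r', r = r' + 1 := ⟨r - 1, by omega⟩
      rcases Nat.eq_zero_or_pos dmax with h | h
      · subst h; simp [hN]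
      · obtain ⟨d', rfl⟩ : ∃ d', dmax = d' + 1 := ⟨dmax - 1, by omega⟩
        simp only [hN, Nat.add_sub_cancel]
        have h6 : d' * (r' + 1) = d' * r' + d' := by ring
        rw [h6, Nat.mul_comm r' d']
        omega
    omega
  -- decoding
  have hdec : ∀ (S : Finset V), v ∈ S → (G.induce (S : Set V)).Connected →
      ∀ extra, runF G q0 cur0 (simF G S q0 cur0 ++ extra) = S := by
    intro S hvS hconn extra
    refine runF_simF G v S hvS hconn q0 cur0 ?_ ?_ ?_ ?_ ?_ extra
    · simp [hcur0]
    · simpa [hcur0] using hvS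
    · intro p hp
      simp only [hq0, List.mem_singleton] at hp
      subst hp
      simp [hcur0]
    · intro p hp w hw
      simp only [hq0, List.mem_singleton] at hp
      subst hp
      exact (mem_nbrsL G).mp hw
    · intro u hu w haw hwS
      simp only [hcur0, Finset.mem_singleton] at hu
      subst hu
      exact Or.inr ⟨(u, nbrsL G u), by simp [hq0], (mem_nbrsL G).mpr haw⟩
  -- padding helper
  have epad : ∀ (l : List Bool) (i : ℕ), i < N → l.length ≤ N →
      ∀ (hh : i < (l ++ List.replicate (N - l.length) false).length),
      (l ++ List.replicate (N - l.length) false)[i] = l.getD i false := by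
    intro l i hiN hlN hh
    rcases Nat.lt_or_ge i l.length with h | h
    · rw [List.getElem_append_left h, List.getD_eq_getElem l false h]
    · rw [List.getElem_append_right h, List.getElem_replicate,
        List.getD_eq_default _ _ h]
  -- the injection
  set f : {S : Finset V // v ∈ S ∧ S.card = r ∧ (G.induce (S : Set V)).Connected} →
      (Fin N → Bool) :=
    fun S i => (simF G S.1 q0 cur0).getD i false with hf
  have hinj : Function.Injective f := by
    rintro ⟨S1, hv1, hc1, hconn1⟩ ⟨S2, hv2, hc2, hconn2⟩ heq
    simp only [Subtype.mk.injEq]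
    have hlen1 : (simF G S1 q0 cur0).length ≤ N := hlen S1 hv1 hc1
    have hlen2 : (simF G S2 q0 cur0).length ≤ N := hlen S2 hv2 hc2
    have hpad : simF G S1 q0 cur0
          ++ List.replicate (N - (simF G S1 q0 cur0).length) false
        = simF G S2 q0 cur0
          ++ List.replicate (N - (simF G S2 q0 cur0).length) false := by
      apply List.ext_getElem
      · simp; omega
      · intro i h1 h2
        have hiN : i < N := by
          simp only [List.length_append, List.length_replicate] at h1
          omega
        rw [epad _ i hiN hlen1 h1, epad _ i hiN hlen2 h2]
        have := congrFun heq ⟨i, hiN⟩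
        simpa [hf] using this
    have d1 := hdec S1 hv1 hconn1 (List.replicate (N - (simF G S1 q0 cur0).length) false)
    have d2 := hdec S2 hv2 hconn2 (List.replicate (N - (simF G S2 q0 cur0).length) false)
    rw [← d1, ← d2, hpad]
  have hcard := Nat.card_le_card_of_injective f hinj
  have hfin : Nat.card (Fin N → Bool) = 2 ^ N := by
    rw [Nat.card_eq_fintype_card, Fintype.card_fun]
    simp
  omega
end

section
/- Let (ρ_k) be a sequence of real numbers in [0,1] satisfying ρ_{k+1} ≤ 3^{2d+2} (m k²)^{2d+2} ρ_k² for all k ≥ 1. Suppose that ρ_1 is small enough so that 3^{2d+2}(m k²)^{2d+2} ρ_1^{2^k/(10 k²)} ≤ 1 for all k ≥ 1. Then ρ_k ≤ ρ_1^{2^{k−2}} for all k ≥ 1. -/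
noncomputable def cseq : ℕ → ℝ
  | 0 => 1
  | n + 1 => cseq n - 1 / (10 * ((n : ℝ) + 1) ^ 2)

lemma cseq_ge (n : ℕ) : 4/5 + 1/(5 * ((n:ℝ)+1)) ≤ cseq n := by
  induction n with
  | zero => norm_num [cseq]
  | succ n ih =>
    have h : (0:ℝ) < (n:ℝ)+1 := by positivity
    have key : 1/(10*((n:ℝ)+1)^2) ≤ 1/(5*((n:ℝ)+1)) - 1/(5*((n:ℝ)+2)) := by
      rw [div_sub_div _ _ (by positivity) (by positivity),
        div_le_div_iff₀ (by positivity) (by positivity)]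
      nlinarith [h]
    have hgoal : cseq (n+1) = cseq n - 1 / (10 * ((n : ℝ) + 1) ^ 2) := rfl
    rw [hgoal]
    push_cast
    rw [show ((n:ℝ)+1+1) = (n:ℝ)+2 from by ring]
    linarith [ih, key]

lemma cseq_half (n : ℕ) : (1:ℝ)/2 ≤ cseq n := by
  have := cseq_ge n
  have h : (0:ℝ) < 1/(5 * ((n:ℝ)+1)) := by positivity
  linarith

/-- If `ρ_{k+1} ≤ 3^{2d+2} (m k²)^{2d+2} ρ_k²` and `ρ_1` is small enough so that
`3^{2d+2} (m k²)^{2d+2} ρ_1^{2^k/(10k²)} ≤ 1` for all `k ≥ 1`, then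
`ρ_k ≤ ρ_1^{2^{k-2}}` for all `k ≥ 1`. -/
theorem stmt_2 (d m : ℕ) (hd : 1 ≤ d) (hm : 1 ≤ m) (ρ : ℕ → ℝ)
    (hρ : ∀ k, ρ k ∈ Set.Icc (0 : ℝ) 1)
    (hrec : ∀ k : ℕ, 1 ≤ k →
      ρ (k + 1) ≤ 3 ^ (2 * d + 2) * ((m : ℝ) * (k : ℝ) ^ 2) ^ (2 * d + 2) * ρ k ^ 2)
    (hsmall : ∀ k : ℕ, 1 ≤ k →
      3 ^ (2 * d + 2) * ((m : ℝ) * (k : ℝ) ^ 2) ^ (2 * d + 2) *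
          ρ 1 ^ ((2 : ℝ) ^ (k : ℕ) / (10 * (k : ℝ) ^ 2)) ≤ 1) :
    ∀ k : ℕ, 1 ≤ k → ρ k ≤ ρ 1 ^ ((2 : ℝ) ^ ((k : ℝ) - 2)) := by
  have h0 : 0 ≤ ρ 1 := (hρ 1).1
  have h1 : ρ 1 ≤ 1 := (hρ 1).2
  rcases eq_or_lt_of_le h0 with hz | hpos
  · -- ρ 1 = 0
    have hall : ∀ n : ℕ, ρ (n+1) = 0 := by
      intro n
      induction n with
      | zero => exact hz.symm
      | succ n ih =>
        have hr := hrec (n+1) (by omega)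
        rw [ih] at hr
        norm_num at hr
        have hnn := (hρ (n+2)).1
        linarith
    intro k hk
    obtain ⟨n, rfl⟩ := Nat.exists_eq_succ_of_ne_zero (by omega : k ≠ 0)
    rw [hall n]
    exact Real.rpow_nonneg h0 _
  · -- 0 < ρ 1
    have main : ∀ n : ℕ, ρ (n+1) ≤ ρ 1 ^ (cseq n * 2^n) := by
      intro n
      induction n with
      | zero =>
        simp [cseq, Real.rpow_one]
      | succ n ih =>
        have hr := hrec (n+1) (by omega)
        have hC : (0:ℝ) ≤ 3 ^ (2 * d + 2) * ((m : ℝ) * ((n+1 : ℕ) : ℝ) ^ 2) ^ (2 * d + 2) := by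
          positivity
        have hsq : ρ (n+1) ^ 2 ≤ (ρ 1 ^ (cseq n * 2^n)) ^ 2 :=
          pow_le_pow_left₀ (hρ (n+1)).1 ih 2
        have hsq2 : (ρ 1 ^ (cseq n * 2^n)) ^ 2 = ρ 1 ^ (cseq n * 2^(n+1)) := by
          rw [sq, ← Real.rpow_add hpos]
          congr 1
          rw [pow_succ]; ring
        have hsplit : cseq n * 2^(n+1)
            = (2:ℝ)^(n+1) / (10 * (((n+1:ℕ)):ℝ)^2) + cseq (n+1) * 2^(n+1) := by
          show cseq n * 2^(n+1)
            = (2:ℝ)^(n+1) / (10 * (((n+1:ℕ)):ℝ)^2)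
              + (cseq n - 1 / (10 * ((n : ℝ) + 1) ^ 2)) * 2^(n+1)
          push_cast
          field_simp
          ring
        have hmul : ρ 1 ^ (cseq n * 2^(n+1))
            = ρ 1 ^ ((2:ℝ)^(n+1) / (10 * (((n+1:ℕ)):ℝ)^2)) * ρ 1 ^ (cseq (n+1) * 2^(n+1)) := by
          rw [hsplit, Real.rpow_add hpos]
        have hs := hsmall (n+1) (by omega)
        have hB : (0:ℝ) ≤ ρ 1 ^ (cseq (n+1) * 2^(n+1)) := Real.rpow_nonneg h0 _
        calc ρ (n+1+1) ≤ 3 ^ (2 * d + 2) * ((m : ℝ) * ((n+1 : ℕ) : ℝ) ^ 2) ^ (2 * d + 2)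
              * ρ (n+1) ^ 2 := hr
          _ ≤ 3 ^ (2 * d + 2) * ((m : ℝ) * ((n+1 : ℕ) : ℝ) ^ 2) ^ (2 * d + 2)
              * ρ 1 ^ (cseq n * 2^(n+1)) := by
              rw [← hsq2]; exact mul_le_mul_of_nonneg_left (hsq.trans_eq rfl) hC
          _ = (3 ^ (2 * d + 2) * ((m : ℝ) * ((n+1 : ℕ) : ℝ) ^ 2) ^ (2 * d + 2)
              * ρ 1 ^ ((2:ℝ)^(n+1) / (10 * (((n+1:ℕ)):ℝ)^2))) * ρ 1 ^ (cseq (n+1) * 2^(n+1)) := by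
              rw [hmul]; ring
          _ ≤ 1 * ρ 1 ^ (cseq (n+1) * 2^(n+1)) := by
              apply mul_le_mul_of_nonneg_right _ hB
              exact_mod_cast hs
          _ = ρ 1 ^ (cseq (n+1) * 2^(n+1)) := one_mul _
    intro k hk
    obtain ⟨n, rfl⟩ := Nat.exists_eq_succ_of_ne_zero (by omega : k ≠ 0)
    refine (main n).trans ?_
    apply Real.rpow_le_rpow_of_exponent_ge hpos h1
    have hhalf := cseq_half n
    have hpow : (2:ℝ) ^ (((n+1:ℕ):ℝ) - 2) = (2:ℝ)^n / 2 := by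
      push_cast
      rw [show ((n:ℝ) + 1 - 2) = (n:ℝ) - 1 by ring, Real.rpow_sub (by norm_num),
        Real.rpow_natCast, Real.rpow_one]
    rw [hpow]
    have h2n : (0:ℝ) < 2^n := by positivity
    nlinarith [hhalf, h2n]
end

section
/- Let (Y_k)_{k∈Z} be a stationary reversible Markov chain on a finite state space S, and h: S → R^m. Then for every k ≥ 0, E[‖h(Y_k) − h(Y_0)‖² ] ≤ k · E[‖h(Y_1) − h(Y_0)‖²], where ‖·‖ is the Euclidean norm on R^m. -/
open Finset

open scoped RealInnerProductSpace

section NPAux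
set_option linter.unusedSectionVars false
variable {S : Type*} [Fintype S] [DecidableEq S] {m : ℕ}

noncomputable def npTap (P : Matrix S S ℝ) (f : S → EuclideanSpace ℝ (Fin m)) :
    S → EuclideanSpace ℝ (Fin m) := fun x => ∑ y, P x y • f y

noncomputable def npIp (π : S → ℝ) (f g : S → EuclideanSpace ℝ (Fin m)) : ℝ :=
  ∑ x, π x * ⟪f x, g x⟫

lemma npIp_comm (π : S → ℝ) (f g : S → EuclideanSpace ℝ (Fin m)) :
    npIp π f g = npIp π g f :=
  Finset.sum_congr rfl fun x _ => by rw [real_inner_comm]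

lemma npIp_Tap (P : Matrix S S ℝ) (π : S → ℝ) (f g : S → EuclideanSpace ℝ (Fin m)) :
    npIp π f (npTap P g) = ∑ x, ∑ y, π x * (P x y * ⟪f x, g y⟫) := by
  simp only [npIp, npTap, inner_sum, real_inner_smul_right, Finset.mul_sum]

lemma npIp_Tap_comm (P : Matrix S S ℝ) (π : S → ℝ)
    (hrev : ∀ x y, π x * P x y = π y * P y x)
    (f g : S → EuclideanSpace ℝ (Fin m)) :
    npIp π (npTap P f) g = npIp π f (npTap P g) := by
  rw [npIp_comm, npIp_Tap, npIp_Tap, Finset.sum_comm]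
  refine Finset.sum_congr rfl fun x _ => Finset.sum_congr rfl fun y _ => ?_
  rw [real_inner_comm, ← mul_assoc, ← hrev x y, mul_assoc]

lemma npIp_nonneg (π : S → ℝ) (hπ0 : ∀ x, 0 ≤ π x)
    (f : S → EuclideanSpace ℝ (Fin m)) : 0 ≤ npIp π f f :=
  Finset.sum_nonneg fun x _ => mul_nonneg (hπ0 x) real_inner_self_nonneg

lemma npTap_pow (P : Matrix S S ℝ) (j : ℕ) (f : S → EuclideanSpace ℝ (Fin m)) (x : S) :
    (∑ y, (P ^ j) x y • f y) = (npTap P)^[j] f x := by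
  induction j generalizing x with
  | zero => simp [Matrix.one_apply, ite_smul]
  | succ j ih =>
      rw [Function.iterate_succ_apply']
      simp only [pow_succ', Matrix.mul_apply, Finset.sum_smul, smul_smul]
      rw [Finset.sum_comm]
      simp only [npTap, ← Finset.smul_sum]
      refine Finset.sum_congr rfl fun z _ => ?_
      rw [← ih z, Finset.smul_sum]
      exact Finset.sum_congr rfl fun w _ => by rw [smul_smul]

lemma npProwPow (P : Matrix S S ℝ) (hProw : ∀ x, ∑ y, P x y = 1) (j : ℕ) (x : S) :
    ∑ y, (P ^ j) x y = 1 := by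
  induction j generalizing x with
  | zero => simp [Matrix.one_apply]
  | succ j ih =>
      simp only [pow_succ, Matrix.mul_apply]
      rw [Finset.sum_comm]
      have : ∀ z : S, ∑ y, (P ^ j) x z * P z y = (P ^ j) x z := by
        intro z; rw [← Finset.mul_sum, hProw, mul_one]
      rw [Finset.sum_congr rfl fun z _ => this z, ih x]

lemma npStatPow (P : Matrix S S ℝ) (π : S → ℝ)
    (hstat : ∀ y, ∑ x, π x * P x y = π y) (j : ℕ) (y : S) :
    ∑ x, π x * (P ^ j) x y = π y := by
  induction j generalizing y with
  | zero => simp [Matrix.one_apply]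
  | succ j ih =>
      simp only [pow_succ, Matrix.mul_apply, Finset.mul_sum]
      rw [Finset.sum_comm]
      have : ∀ z : S, ∑ x, π x * ((P ^ j) x z * P z y) = π z * P z y := by
        intro z
        calc ∑ x, π x * ((P ^ j) x z * P z y)
            = (∑ x, π x * (P ^ j) x z) * P z y := by
              rw [Finset.sum_mul]; exact Finset.sum_congr rfl fun x _ => by ring
          _ = π z * P z y := by rw [ih z]
      rw [Finset.sum_congr rfl fun z _ => this z, hstat]

lemma npRowSum (Q : Matrix S S ℝ) (π : S → ℝ) (hrow : ∀ x, ∑ y, Q x y = 1)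
    (c : S → ℝ) : ∑ x, ∑ y, π x * Q x y * c x = ∑ x, π x * c x := by
  refine Finset.sum_congr rfl fun x _ => ?_
  calc ∑ y, π x * Q x y * c x = ∑ y, Q x y * (π x * c x) :=
        Finset.sum_congr rfl fun y _ => by ring
    _ = (∑ y, Q x y) * (π x * c x) := by rw [Finset.sum_mul]
    _ = π x * c x := by rw [hrow, one_mul]

lemma npStatSum (Q : Matrix S S ℝ) (π : S → ℝ)
    (hst : ∀ y, ∑ x, π x * Q x y = π y) (c : S → ℝ) :
    ∑ x, ∑ y, π x * Q x y * c y = ∑ y, π y * c y := by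
  rw [Finset.sum_comm]
  refine Finset.sum_congr rfl fun y _ => ?_
  rw [← Finset.sum_mul, hst y]

lemma npIp_self (π : S → ℝ) (f : S → EuclideanSpace ℝ (Fin m)) :
    npIp π f f = ∑ x, π x * ‖f x‖ ^ 2 :=
  Finset.sum_congr rfl fun x _ => by rw [real_inner_self_eq_norm_sq]

lemma npIp_sub_left (π : S → ℝ) (f g e : S → EuclideanSpace ℝ (Fin m)) :
    npIp π (fun x => f x - g x) e = npIp π f e - npIp π g e := by
  simp only [npIp, inner_sub_left, mul_sub, Finset.sum_sub_distrib]

lemma npIp_sub_right (π : S → ℝ) (e f g : S → EuclideanSpace ℝ (Fin m)) :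
    npIp π e (fun x => f x - g x) = npIp π e f - npIp π e g := by
  simp only [npIp, inner_sub_right, mul_sub, Finset.sum_sub_distrib]

lemma npTap_sub (P : Matrix S S ℝ) (f g : S → EuclideanSpace ℝ (Fin m)) :
    npTap P (fun x => f x - g x) = fun x => npTap P f x - npTap P g x := by
  funext x
  simp [npTap, smul_sub, Finset.sum_sub_distrib]

lemma npPos2 (P : Matrix S S ℝ) (π : S → ℝ)
    (hπ0 : ∀ x, 0 ≤ π x) (hP0 : ∀ x y, 0 ≤ P x y) (hProw : ∀ x, ∑ y, P x y = 1)
    (hstat : ∀ y, ∑ x, π x * P x y = π y)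
    (f : S → EuclideanSpace ℝ (Fin m)) :
    0 ≤ npIp π f f + npIp π f (npTap P f) := by
  have e1 : npIp π f f = ∑ x, ∑ y, π x * P x y * ‖f x‖ ^ 2 := by
    rw [npIp_self, npRowSum P π hProw]
  have e2 : npIp π f f = ∑ x, ∑ y, π x * P x y * ‖f y‖ ^ 2 := by
    rw [npIp_self, npStatSum P π hstat]
  have e3 := npIp_Tap P π f f
  have key : 2 * (npIp π f f + npIp π f (npTap P f))
      = ∑ x, ∑ y, π x * P x y * ‖f x + f y‖ ^ 2 := by
    calc 2 * (npIp π f f + npIp π f (npTap P f))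
        = (∑ x, ∑ y, π x * P x y * ‖f x‖ ^ 2)
          + (∑ x, ∑ y, π x * P x y * ‖f y‖ ^ 2)
          + 2 * (∑ x, ∑ y, π x * (P x y * ⟪f x, f y⟫)) := by
          rw [e3]; linarith
      _ = ∑ x, ∑ y, π x * P x y * ‖f x + f y‖ ^ 2 := by
          rw [Finset.mul_sum, ← Finset.sum_add_distrib, ← Finset.sum_add_distrib]
          refine Finset.sum_congr rfl fun x _ => ?_
          rw [Finset.mul_sum, ← Finset.sum_add_distrib, ← Finset.sum_add_distrib]
          refine Finset.sum_congr rfl fun y _ => ?_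
          rw [norm_add_sq_real]; ring
  have pos : 0 ≤ ∑ x, ∑ y, π x * P x y * ‖f x + f y‖ ^ 2 :=
    Finset.sum_nonneg fun x _ => Finset.sum_nonneg fun y _ =>
      mul_nonneg (mul_nonneg (hπ0 x) (hP0 x y)) (sq_nonneg _)
  linarith

lemma npE (Q : Matrix S S ℝ) (π : S → ℝ)
    (hrow : ∀ x, ∑ y, Q x y = 1) (hst : ∀ y, ∑ x, π x * Q x y = π y)
    (h : S → EuclideanSpace ℝ (Fin m)) :
    ∑ x, ∑ y, π x * Q x y * ‖h y - h x‖ ^ 2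
      = 2 * npIp π h h - 2 * npIp π h (npTap Q h) := by
  have e3 := npIp_Tap Q π h h
  calc ∑ x, ∑ y, π x * Q x y * ‖h y - h x‖ ^ 2
      = (∑ x, ∑ y, π x * Q x y * ‖h x‖ ^ 2)
        + (∑ x, ∑ y, π x * Q x y * ‖h y‖ ^ 2)
        - 2 * (∑ x, ∑ y, π x * (Q x y * ⟪h x, h y⟫)) := by
        rw [Finset.mul_sum, ← Finset.sum_add_distrib, ← Finset.sum_sub_distrib]
        refine Finset.sum_congr rfl fun x _ => ?_
        rw [Finset.mul_sum, ← Finset.sum_add_distrib, ← Finset.sum_sub_distrib]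
        refine Finset.sum_congr rfl fun y _ => ?_
        rw [norm_sub_sq_real, real_inner_comm]; ring
    _ = 2 * npIp π h h - 2 * npIp π h (npTap Q h) := by
        rw [npRowSum Q π hrow, npStatSum Q π hst, ← npIp_self, ← e3]; ring

lemma npSqExpand (P : Matrix S S ℝ) (π : S → ℝ)
    (hrev : ∀ x y, π x * P x y = π y * P y x)
    (g : S → EuclideanSpace ℝ (Fin m)) :
    npIp π (fun x => g x - npTap P g x) (fun x => g x - npTap P g x)
      = npIp π g g - 2 * npIp π g (npTap P g)
        + npIp π g (npTap P (npTap P g)) := by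
  rw [npIp_sub_left, npIp_sub_right, npIp_sub_right,
    npIp_comm π (npTap P g) g, npIp_Tap_comm P π hrev g (npTap P g)]
  ring

lemma npQdec (P : Matrix S S ℝ) (π : S → ℝ)
    (hπ0 : ∀ x, 0 ≤ π x) (hP0 : ∀ x y, 0 ≤ P x y) (hProw : ∀ x, ∑ y, P x y = 1)
    (hstat : ∀ y, ∑ x, π x * P x y = π y)
    (hrev : ∀ x y, π x * P x y = π y * P y x)
    (g : S → EuclideanSpace ℝ (Fin m)) :
    npIp π (npTap P g) (npTap P g) - npIp π (npTap P g) (npTap P (npTap P g))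
      ≤ npIp π g g - npIp π g (npTap P g) := by
  set u : S → EuclideanSpace ℝ (Fin m) := fun x => g x - npTap P g x with hu
  have h1 := npPos2 P π hπ0 hP0 hProw hstat u
  have h2 := npSqExpand P π hrev g
  have h3 : npIp π u (npTap P u)
      = npIp π g (npTap P g) - 2 * npIp π g (npTap P (npTap P g))
        + npIp π g (npTap P (npTap P (npTap P g))) := by
    rw [hu, npTap_sub, npIp_sub_left, npIp_sub_right, npIp_sub_right,
      npIp_Tap_comm P π hrev g (npTap P g),
      npIp_Tap_comm P π hrev g (npTap P (npTap P g))]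
    ring
  have h4 : npIp π (npTap P g) (npTap P g) = npIp π g (npTap P (npTap P g)) :=
    npIp_Tap_comm P π hrev g (npTap P g)
  have h5 : npIp π (npTap P g) (npTap P (npTap P g))
      = npIp π g (npTap P (npTap P (npTap P g))) :=
    npIp_Tap_comm P π hrev g (npTap P (npTap P g))
  rw [← hu] at h2
  linarith

lemma npIp_iter_comm (P : Matrix S S ℝ) (π : S → ℝ)
    (hrev : ∀ x y, π x * P x y = π y * P y x) (n : ℕ)
    (f g : S → EuclideanSpace ℝ (Fin m)) :
    npIp π ((npTap P)^[n] f) g = npIp π f ((npTap P)^[n] g) := by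
  induction n generalizing f g with
  | zero => simp
  | succ n ih =>
      rw [Function.iterate_succ_apply, Function.iterate_succ_apply',
        ih (npTap P f) g, npIp_Tap_comm P π hrev]

lemma npQiter (P : Matrix S S ℝ) (π : S → ℝ)
    (hπ0 : ∀ x, 0 ≤ π x) (hP0 : ∀ x y, 0 ≤ P x y) (hProw : ∀ x, ∑ y, P x y = 1)
    (hstat : ∀ y, ∑ x, π x * P x y = π y)
    (hrev : ∀ x y, π x * P x y = π y * P y x)
    (h : S → EuclideanSpace ℝ (Fin m)) (i : ℕ) :
    npIp π ((npTap P)^[i] h) ((npTap P)^[i] h)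
      - npIp π ((npTap P)^[i] h) (npTap P ((npTap P)^[i] h))
      ≤ npIp π h h - npIp π h (npTap P h) := by
  induction i with
  | zero => simp
  | succ i ih =>
      calc npIp π ((npTap P)^[i+1] h) ((npTap P)^[i+1] h)
          - npIp π ((npTap P)^[i+1] h) (npTap P ((npTap P)^[i+1] h))
          ≤ npIp π ((npTap P)^[i] h) ((npTap P)^[i] h)
            - npIp π ((npTap P)^[i] h) (npTap P ((npTap P)^[i] h)) := by
            rw [Function.iterate_succ_apply']
            exact npQdec P π hπ0 hP0 hProw hstat hrev _
        _ ≤ _ := ih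

end NPAux


/-- Naor–Peres/Ball: for a stationary reversible Markov chain with transition
matrix `P` and stationary distribution `π` on a finite state space, and any
`h : S → ℝ^m`, `E[‖h(Y_k) - h(Y_0)‖²] ≤ k E[‖h(Y_1) - h(Y_0)‖²]`, where the
joint law of `(Y_0, Y_k)` is `π(x) P^k(x,y)`. -/
theorem stmt_14 {S : Type*} [Fintype S] [DecidableEq S] (m : ℕ)
    (P : Matrix S S ℝ) (π : S → ℝ)
    (hπ0 : ∀ x, 0 ≤ π x) (hπ1 : ∑ x, π x = 1)
    (hP0 : ∀ x y, 0 ≤ P x y) (hProw : ∀ x, ∑ y, P x y = 1)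
    (hstat : ∀ y, ∑ x, π x * P x y = π y)
    (hrev : ∀ x y, π x * P x y = π y * P y x)
    (h : S → EuclideanSpace ℝ (Fin m)) (k : ℕ) :
    ∑ x, ∑ y, π x * (P ^ k) x y * ‖h y - h x‖ ^ 2
      ≤ (k : ℝ) * ∑ x, ∑ y, π x * P x y * ‖h y - h x‖ ^ 2 := by
  classical
  set a : ℕ → ℝ := fun j => npIp π h ((npTap P)^[j] h) with ha
  have hTk : npTap (P ^ k) h = (npTap P)^[k] h := funext fun x => npTap_pow P k h x
  have hEk : ∑ x, ∑ y, π x * (P ^ k) x y * ‖h y - h x‖ ^ 2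
      = 2 * npIp π h h - 2 * a k := by
    rw [npE (P ^ k) π (npProwPow P hProw k) (npStatPow P π hstat k) h, hTk, ha]
  have hE1 : ∑ x, ∑ y, π x * P x y * ‖h y - h x‖ ^ 2
      = 2 * npIp π h h - 2 * npIp π h (npTap P h) := npE P π hProw hstat h
  have hstep : ∀ j, a j - a (j+1) ≤ npIp π h h - npIp π h (npTap P h) := by
    intro j
    rcases Nat.even_or_odd j with ⟨i, hi⟩ | ⟨i, hi⟩
    · subst hi
      have e0 : a (i+i) = npIp π ((npTap P)^[i] h) ((npTap P)^[i] h) := by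
        simp only [ha, Function.iterate_add_apply]
        rw [← npIp_iter_comm P π hrev i]
      have e1' : a (i+i+1)
          = npIp π ((npTap P)^[i] h) (npTap P ((npTap P)^[i] h)) := by
        have hj : i + i + 1 = i + (i + 1) := by omega
        simp only [ha, hj, Function.iterate_add_apply, Function.iterate_succ_apply']
        rw [← npIp_iter_comm P π hrev i]
      rw [e0, e1']
      exact npQiter P π hπ0 hP0 hProw hstat hrev h i
    · subst hi
      have e1' : a (2*i+1)
          = npIp π ((npTap P)^[i] h) (npTap P ((npTap P)^[i] h)) := by
        have hj : 2*i + 1 = i + (i + 1) := by omega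
        simp only [ha, hj, Function.iterate_add_apply, Function.iterate_succ_apply']
        rw [← npIp_iter_comm P π hrev i]
      have e2' : a (2*i+1+1)
          = npIp π ((npTap P)^[i] h)
              (npTap P (npTap P ((npTap P)^[i] h))) := by
        have hj : 2*i + 1 + 1 = i + (i + 1 + 1) := by omega
        simp only [ha, hj, Function.iterate_add_apply, Function.iterate_succ_apply']
        rw [← npIp_iter_comm P π hrev i]
      rw [e1', e2']
      have hsq := npSqExpand P π hrev ((npTap P)^[i] h)
      have hnn := npIp_nonneg π hπ0
        (fun x => (npTap P)^[i] h x - npTap P ((npTap P)^[i] h) x)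
      have hq := npQiter P π hπ0 hP0 hProw hstat hrev h i
      linarith
  have hsum : a 0 - a k = ∑ j ∈ Finset.range k, (a j - a (j+1)) :=
    (Finset.sum_range_sub' a k).symm
  have ha0 : a 0 = npIp π h h := by simp [ha]
  have hle : ∑ j ∈ Finset.range k, (a j - a (j+1))
      ≤ (k : ℝ) * (npIp π h h - npIp π h (npTap P h)) := by
    calc ∑ j ∈ Finset.range k, (a j - a (j+1))
        ≤ ∑ _j ∈ Finset.range k, (npIp π h h - npIp π h (npTap P h)) :=
          Finset.sum_le_sum fun j _ => hstep j
      _ = (k : ℝ) * (npIp π h h - npIp π h (npTap P h)) := by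
          rw [Finset.sum_const, Finset.card_range, nsmul_eq_mul]
  have hfin : (k : ℝ) * (2 * npIp π h h - 2 * npIp π h (npTap P h))
      = 2 * ((k : ℝ) * (npIp π h h - npIp π h (npTap P h))) := by ring
  rw [hEk, hE1]
  linarith
end
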